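/- Let c = 2r with r an odd positive integer, let b be an odd integer, and let a be an integer with gcd(a, 2r) = 1. Then G(a, b; 2r) = 2 · e(−u b² / r) · G(2a, 0; r), where u is any integer with 8au ≡ 1 (mod r). -/

import Mathlib

/-- `e(x) = exp(2πix)`. -/
noncomputable def e (x : ℝ) : ℂ := Complex.exp (2 * Real.pi * Complex.I * x)

/-- The quadratic Gauss sum `G(a,b;c) = ∑_{x mod c} e((a x² + b x)/c)`. -/
noncomputable def G (a b : ℤ) (c : ℕ) : ℂ :=
  ∑ x ∈ Finset.range c, e (((a * (x : ℤ) ^ 2 + b * (x : ℤ) : ℤ) : ℝ) / (c : ℝ))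

lemma e_add (x y : ℝ) : e (x + y) = e x * e y := by
  unfold e; rw [← Complex.exp_add]; push_cast; ring_nf

lemma e_int (n : ℤ) : e n = 1 := by
  unfold e
  rw [← Complex.exp_int_mul_two_pi_mul_I n]
  congr 1; push_cast; ring

lemma e_int_add (x : ℝ) (n : ℤ) : e (x + n) = e x := by
  rw [e_add, e_int, mul_one]

lemma e_div_congr {r : ℕ} (hr : 0 < r) {m n : ℤ} (h : (r:ℤ) ∣ m - n) :
    e ((m:ℝ) / r) = e ((n:ℝ) / r) := by
  obtain ⟨k, hk⟩ := h
  have hm : m = n + r * k := by linarith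
  have hr' : (r:ℝ) ≠ 0 := by positivity
  have h2 : (m:ℝ)/r = (n:ℝ)/r + (k:ℤ) := by
    rw [hm]; push_cast; field_simp
  rw [h2, e_int_add]

lemma sum_range_zmod {r : ℕ} [NeZero r] (F : ℤ → ℂ) :
    ∑ x ∈ Finset.range r, F x = ∑ z : ZMod r, F (z.val) := by
  refine Finset.sum_bij' (fun x _ => ((x : ℕ) : ZMod r)) (fun z _ => z.val) ?_ ?_ ?_ ?_ ?_
  · intros; exact Finset.mem_univ _
  · intro z _; exact Finset.mem_range.mpr (ZMod.val_lt z)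
  · intro x hx; exact ZMod.val_cast_of_lt (Finset.mem_range.mp hx)
  · intro z _; exact ZMod.natCast_rightInverse z
  · intro x hx; rw [ZMod.val_cast_of_lt (Finset.mem_range.mp hx)]

set_option maxHeartbeats 1000000 in
theorem stmt3 (r : ℕ) (hr : 0 < r) (hrodd : Odd r) (a b : ℤ) (hbodd : Odd b)
    (hco : Int.gcd a (2 * (r : ℤ)) = 1) (u : ℤ) (hu : 8 * a * u ≡ 1 [ZMOD r]) :
    G a b (2 * r) = 2 * e (((-(u * b ^ 2) : ℤ) : ℝ) / (r : ℝ)) * G (2 * a) 0 r := by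
  haveI : NeZero r := ⟨hr.ne'⟩
  have hrz : Odd (r : ℤ) := by exact_mod_cast hrodd
  have haodd : Odd a := by
    rw [← Int.not_even_iff_odd]
    intro h2
    have hd2 : (2:ℤ) ∣ (Int.gcd a (2*(r:ℤ)) : ℤ) := Int.dvd_coe_gcd h2.two_dvd ⟨r, rfl⟩
    rw [hco] at hd2
    norm_num at hd2
  have hd : (r:ℤ) ∣ 1 - 8*a*u := hu.dvd
  set f : ℤ → ℂ := fun m => e (((a*m^2 + b*m : ℤ) : ℝ) / ((2*r : ℕ) : ℝ)) with hf
  have hfcong : ∀ m n : ℤ, (r:ℤ) ∣ m - n → f m = f n := by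
    intro m n ⟨k, hk⟩
    apply e_div_congr (by omega : 0 < 2*r)
    have heven : Even (k*(a*k*r+b)) := by
      rcases Int.even_or_odd k with hk2 | hk2
      · exact hk2.mul_right _
      · exact (((haodd.mul hk2).mul hrz).add_odd hbodd).mul_left k
    obtain ⟨j, hj⟩ := heven
    have hm : m = n + r*k := by linarith
    refine ⟨k*a*n + j, ?_⟩
    subst hm
    push_cast
    linear_combination (r:ℤ) * hj
  -- Step A: split the range
  have hA1 : G a b (2*r) = (∑ i ∈ Finset.Ico 0 r, f i) + ∑ i ∈ Finset.Ico r (2*r), f i := by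
    rw [G, Finset.range_eq_Ico]
    exact (Finset.sum_Ico_consecutive _ (Nat.zero_le r) (by omega)).symm
  have hA2 : ∑ i ∈ Finset.Ico r (2*r), f i = ∑ x ∈ Finset.range r, f x := by
    rw [Finset.sum_Ico_eq_sum_range, show 2*r - r = r from by omega]
    exact Finset.sum_congr rfl fun x _ => hfcong _ _ ⟨1, by push_cast; ring⟩
  have hA3 : ∑ i ∈ Finset.Ico 0 r, f (i : ℤ) = ∑ x ∈ Finset.range r, f (x : ℤ) := by
    rw [← Finset.range_eq_Ico]
  have hsplit : G a b (2*r) = 2 * ∑ x ∈ Finset.range r, f x := by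
    rw [hA1, hA2, hA3]; ring
  -- Step B: go to ZMod r
  have hB : ∑ x ∈ Finset.range r, f x = ∑ z : ZMod r, f z.val := sum_range_zmod f
  -- Step C: reindexing
  set σ : ZMod r → ZMod r := fun z => 2 * z + ((-4*u*b : ℤ) : ZMod r) with hσ
  have hσbij : Function.Bijective σ := by
    rw [← Finite.injective_iff_bijective]
    intro x y h
    have h2u : IsUnit (2 : ZMod r) := by
      have hc := ZMod.coe_unitOfCoprime 2 hrodd.coprime_two_left
      rw [show (((2:ℕ) : ZMod r)) = (2 : ZMod r) by push_cast; ring] at hc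
      exact hc ▸ (ZMod.unitOfCoprime 2 hrodd.coprime_two_left).isUnit
    have h2 : (2 : ZMod r) * x = 2 * y := add_right_cancel h
    exact h2u.mul_left_cancel h2
  have hreindex : ∑ z : ZMod r, f z.val = ∑ z : ZMod r, f (σ z).val :=
    (Fintype.sum_bijective σ hσbij (fun z => f (σ z).val) (fun z => f z.val) (fun z => rfl)).symm
  have hv : ∀ z : ZMod r, (((z.val : ℤ)) : ZMod r) = z := fun z => by
    rw [Int.cast_natCast]; exact ZMod.natCast_rightInverse z
  have key : ∀ z : ZMod r,
      f (σ z).val = e (((-(u * b ^ 2) : ℤ) : ℝ) / (r : ℝ)) *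
        e (((2*a*(z.val:ℤ)^2 + 0*(z.val:ℤ) : ℤ) : ℝ) / (r : ℝ)) := by
    intro z
    set w : ℤ := (z.val : ℤ) with hw
    have step1 : f ((σ z).val : ℤ) = f (2*(w - 2*u*b)) := by
      apply hfcong
      rw [← ZMod.intCast_zmod_eq_zero_iff_dvd]
      push_cast [hv]
      rw [hσ]
      push_cast
      rw [hw, hv]
      ring
    have hrpos : (0:ℝ) < (r:ℝ) := by exact_mod_cast hr
    have step2 : f (2*(w - 2*u*b)) = e (((2*a*(w - 2*u*b)^2 + b*(w - 2*u*b) : ℤ) : ℝ) / (r : ℝ)) := by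
      rw [hf]
      refine congrArg e ?_
      push_cast
      rw [div_eq_div_iff (by linarith) (by linarith)]
      ring
    have step3 : e (((2*a*(w - 2*u*b)^2 + b*(w - 2*u*b) : ℤ) : ℝ) / (r : ℝ))
        = e (((-(u*b^2) + (2*a*w^2 + 0*w) : ℤ) : ℝ) / (r : ℝ)) := by
      apply e_div_congr hr
      have heq : (2*a*(w - 2*u*b)^2 + b*(w - 2*u*b)) - (-(u*b^2) + (2*a*w^2 + 0*w))
          = (1 - 8*a*u) * (w*b - u*b^2) := by ring
      rw [heq]
      exact hd.mul_right _
    have step4 : e (((-(u*b^2) + (2*a*w^2 + 0*w) : ℤ) : ℝ) / (r : ℝ))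
        = e (((-(u * b ^ 2) : ℤ) : ℝ) / (r : ℝ)) * e (((2*a*w^2 + 0*w : ℤ) : ℝ) / (r : ℝ)) := by
      rw [← e_add]
      exact congrArg e (by push_cast; ring)
    rw [step1, step2, step3, step4]
  have hC : ∑ z : ZMod r, f (σ z).val
      = e (((-(u * b ^ 2) : ℤ) : ℝ) / (r : ℝ)) * G (2*a) 0 r := by
    rw [Finset.sum_congr rfl (fun z _ => key z), ← Finset.mul_sum]
    congr 1
    rw [G, sum_range_zmod (fun m => e (((2*a*m^2 + 0*m : ℤ) : ℝ) / (r : ℝ)))]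
  rw [hsplit, hB, hreindex, hC]
  ring
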